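/- For any string x over Σ of length at most d (with $ appended so that x is $-terminal), the probability over a random underlying function ρ that the transcript τ(x,ρ) is complete is at least 1 − 1/n². -/

import Mathlib

open MeasureTheory

namespace EditLSH

/-- Hash operations: hash-insert, hash-replace, hash-match. -/
inductive HashOp | ins | rep | mat
  deriving DecidableEq

/-- Grid walk characters. -/
inductive GOp | gins | gdel | grep | gloop | gmat | gstop
  deriving DecidableEq

/-- Transformation operations. -/
inductive TOp | tins | tdel | trep
  deriving DecidableEq

/-- `p_a = √(p/(1+p))`. -/
noncomputable def pa (p : ℝ) : ℝ := Real.sqrt (p / (1 + p))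

/-- `p_r = √p/(√(1+p) − √p)`. -/
noncomputable def prr (p : ℝ) : ℝ := Real.sqrt p / (Real.sqrt (1 + p) - Real.sqrt p)

/-- `L = 8d/(1−p_a) + 6 ln n`. -/
noncomputable def Lreal (p : ℝ) (d n : ℕ) : ℝ := 8 * d / (1 - pa p) + 6 * Real.log n

/-- The number of valid hash positions: `k` is a valid position iff `(k : ℝ) < Lreal p d n`
iff `k < LN p d n`. -/
noncomputable def LN (p : ℝ) (d n : ℕ) : ℕ := ⌈Lreal p d n⌉₊

/-- An underlying function: a map from (character, hash position) pairs to pairs of reals.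
Characters are `Option α`, where `none` plays the role of the special character `$`. -/
abbrev Ufun (α : Type) (p : ℝ) (d n : ℕ) : Type := (Option α × Fin (LN p d n)) → ℝ × ℝ

/-- Extend an underlying function to all of `ℕ` (positions `≥ L` are never queried). -/
noncomputable def ext {α : Type} (p : ℝ) (d n : ℕ) (ρ : Ufun α p d n) :
    Option α × ℕ → ℝ × ℝ :=
  fun ck => if h : ck.2 < LN p d n then ρ (ck.1, ⟨ck.2, h⟩) else (1, 1)

/-- A string is `$`-terminal if its last character is `$` (i.e. `none`) and `$` occurs
nowhere else. -/
def DollarTerminal {α : Type} (x : List (Option α)) : Prop :=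
  ∃ w : List α, x = w.map some ++ [none]

/-- The transcript of the hash computation: the list of operations performed by the
while loop, given the remaining input, the fuel `LN - k`, and the current output length `k`. -/
noncomputable def transcriptAux {α : Type} (pav prv : ℝ) (ρ : Option α × ℕ → ℝ × ℝ) :
    ℕ → List (Option α) → ℕ → List HashOp
  | 0, _, _ => []
  | _ + 1, [], _ => []
  | fuel + 1, c :: rest, k =>
    if (ρ (c, k)).1 ≤ pav then HashOp.ins :: transcriptAux pav prv ρ fuel (c :: rest) (k + 1)
    else if (ρ (c, k)).2 ≤ prv then HashOp.rep :: transcriptAux pav prv ρ fuel rest (k + 1)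
    else HashOp.mat :: transcriptAux pav prv ρ fuel rest (k + 1)

/-- The hash string produced by the while loop.  Output characters live in
`Option (Option α)`, with `none` playing the role of `⊥`. -/
noncomputable def hashAux {α : Type} (pav prv : ℝ) (ρ : Option α × ℕ → ℝ × ℝ) :
    ℕ → List (Option α) → ℕ → List (Option (Option α))
  | 0, _, _ => []
  | _ + 1, [], _ => []
  | fuel + 1, c :: rest, k =>
    if (ρ (c, k)).1 ≤ pav then none :: hashAux pav prv ρ fuel (c :: rest) (k + 1)
    else if (ρ (c, k)).2 ≤ prv then none :: hashAux pav prv ρ fuel rest (k + 1)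
    else some c :: hashAux pav prv ρ fuel rest (k + 1)

/-- The transcript `τ(x,ρ)`. -/
noncomputable def transcript {α : Type} (p : ℝ) (d n : ℕ) (ρ : Ufun α p d n)
    (x : List (Option α)) : List HashOp :=
  transcriptAux (pa p) (prr p) (ext p d n ρ) (LN p d n) x 0

/-- The hash `h_ρ(x)` of an (already `$`-terminal) string `x`. -/
noncomputable def hash {α : Type} (p : ℝ) (d n : ℕ) (ρ : Ufun α p d n)
    (x : List (Option α)) : List (Option (Option α)) :=
  hashAux (pa p) (prr p) (ext p d n ρ) (LN p d n) x 0

/-- `τ(x,ρ)` is complete if `|τ(x,ρ)| < L`. -/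
noncomputable def CompleteT (p : ℝ) (d n : ℕ) (τ : List HashOp) : Prop :=
  (τ.length : ℝ) < Lreal p d n

/-- The index function `i(x,k,ρ)`: the scanning index just before the `(k+1)`-st operation,
i.e. the number of non-hash-insert operations among the first `k` operations. -/
noncomputable def idx {α : Type} (p : ℝ) (d n : ℕ) (ρ : Ufun α p d n)
    (x : List (Option α)) (k : ℕ) : ℕ :=
  ((transcript p d n ρ x).take k).countP (fun op => decide (op ≠ HashOp.ins))

/-- The `k`-th character `g_k(x,y,ρ)` of the grid walk. -/
noncomputable def gridChar {α : Type} [DecidableEq α] (p : ℝ) (d n : ℕ) (ρ : Ufun α p d n)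
    (x y : List (Option α)) (k : ℕ) : GOp :=
  if k < min (transcript p d n ρ x).length (transcript p d n ρ y).length then
    if x[idx p d n ρ x k]? ≠ y[idx p d n ρ y k]? then
      match (transcript p d n ρ x).getD k HashOp.ins, (transcript p d n ρ y).getD k HashOp.ins with
      | HashOp.rep, HashOp.rep => GOp.grep
      | HashOp.rep, HashOp.ins => GOp.gdel
      | HashOp.ins, HashOp.rep => GOp.gins
      | HashOp.ins, HashOp.ins => GOp.gloop
      | _, _ => GOp.gstop
    else
      match (transcript p d n ρ x).getD k HashOp.ins with
      | HashOp.ins => GOp.gloop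
      | _ => GOp.gmat
  else GOp.gstop

/-- The grid walk `g(x,y,ρ)`: a sequence of length `max(|τ(x,ρ)|,|τ(y,ρ)|)`. -/
noncomputable def gridWalk {α : Type} [DecidableEq α] (p : ℝ) (d n : ℕ) (ρ : Ufun α p d n)
    (x y : List (Option α)) : List GOp :=
  (List.range (max (transcript p d n ρ x).length (transcript p d n ρ y).length)).map
    (gridChar p d n ρ x y)

/-- The grid walk is alive: both transcripts are complete and no `stop` occurs. -/
noncomputable def Alive {α : Type} [DecidableEq α] (p : ℝ) (d n : ℕ) (ρ : Ufun α p d n)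
    (x y : List (Option α)) : Prop :=
  CompleteT p d n (transcript p d n ρ x) ∧ CompleteT p d n (transcript p d n ρ y) ∧
    GOp.gstop ∉ gridWalk p d n ρ x y

/-- The uniform probability measure on `[0,1) × [0,1)`. -/
noncomputable def unif01 : Measure (ℝ × ℝ) :=
  (volume.restrict (Set.Ico (0 : ℝ) 1)).prod (volume.restrict (Set.Ico (0 : ℝ) 1))

instance : SigmaFinite unif01 := by unfold unif01; infer_instance

/-- The probability measure on underlying functions: all values independent, each
coordinate uniform on `[0,1)`. -/
noncomputable def μU (α : Type) [Fintype α] (p : ℝ) (d n : ℕ) : Measure (Ufun α p d n) :=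
  Measure.pi fun _ : Option α × Fin (LN p d n) => unif01

/-- Costs for the Levenshtein distance (formerly `Levenshtein.Cost` in Mathlib). -/
structure Levenshtein.Cost (α β δ : Type) where
  delete : α → δ
  insert : β → δ
  substitute : α → β → δ

/-- The default cost: unit deletions and insertions, substitution free iff equal
(formerly `Levenshtein.defaultCost` in Mathlib). -/
def Levenshtein.defaultCost {α : Type} [DecidableEq α] : Levenshtein.Cost α α ℕ where
  delete _ := 1
  insert _ := 1
  substitute a b := if a = b then 0 else 1

/-- The Levenshtein distance with cost `C` (formerly `levenshtein` in Mathlib), given by its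
characterising recursion (`levenshtein_nil_nil`, `_nil_cons`, `_cons_nil`, `_cons_cons`). -/
def levenshtein {α β δ : Type} (C : Levenshtein.Cost α β δ) [AddZeroClass δ] [Min δ] :
    List α → List β → δ
  | [], [] => 0
  | [], y :: ys => C.insert y + levenshtein C [] ys
  | x :: xs, [] => C.delete x + levenshtein C xs []
  | x :: xs, y :: ys =>
    min (C.delete x + levenshtein C xs (y :: ys))
      (min (C.insert y + levenshtein C (x :: xs) ys) (C.substitute x y + levenshtein C xs ys))

/-- Edit distance: the minimum number of single-character insertions, deletions and
replacements needed to transform `x` into `y`. -/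
def ED {β : Type} [DecidableEq β] (x y : List β) : ℕ :=
  levenshtein Levenshtein.defaultCost x y

/-- The smallest index at which `s` and `y` differ (`0` if `s = y`). -/
def firstDiff {β : Type} [DecidableEq β] (s y : List β) : ℕ :=
  (((List.range (max s.length y.length + 1)).find? fun i => decide (s[i]? ≠ y[i]?)).getD 0)

/-- Apply a single transformation operation to `s`, greedily relative to `y`. -/
def applyOp {β : Type} [DecidableEq β] [Inhabited β] (y s : List β) : TOp → List β
  | TOp.tins => s.insertIdx (firstDiff s y) (y.getD (firstDiff s y) default)
  | TOp.tdel => s.eraseIdx (firstDiff s y)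
  | TOp.trep => s.set (firstDiff s y) (y.getD (firstDiff s y) default)

/-- `T(x,y)`: greedily apply the transformation `T` to `x`, relative to `y`. -/
def applyT {β : Type} [DecidableEq β] [Inhabited β] (x y : List β) (T : List TOp) : List β :=
  T.foldl (fun s op => applyOp y s op) x

/-- `T` is valid for `x` and `y`. -/
def ValidT {β : Type} (T : List TOp) (x y : List β) : Prop :=
  T.countP (fun o => decide (o = TOp.tdel ∨ o = TOp.trep)) ≤ x.length ∧
    T.countP (fun o => decide (o = TOp.tins ∨ o = TOp.trep)) ≤ y.length

/-- `T` solves `x` and `y`. -/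
def Solves {β : Type} [DecidableEq β] [Inhabited β] (T : List TOp) (x y : List β) : Prop :=
  ValidT T x y ∧ applyT x y T = y ∧ ∀ i < T.length, applyT x y (T.take i) ≠ y

/-- Convert a grid walk character to a transformation operation (dropping loop/match/stop). -/
def toTOp : GOp → Option TOp
  | GOp.gins => some TOp.tins
  | GOp.gdel => some TOp.tdel
  | GOp.grep => some TOp.trep
  | _ => none

open Classical in
/-- The transformation `𝒯(x,y,ρ)` induced by `x`, `y` and `ρ`. -/
noncomputable def inducedT {α : Type} [DecidableEq α] (p : ℝ) (d n : ℕ) (ρ : Ufun α p d n)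
    (x y : List (Option α)) : List TOp :=
  if Alive p d n ρ x y then (gridWalk p d n ρ x y).filterMap toTOp else []

/-- Nodes of the graph `G(x,y)`: grid nodes `(i,j)` plus the stop node (`none`). -/
abbrev Node : Type := Option (ℕ × ℕ)

/-- The arcs of `G(x,y)`: `stepG x y v op = some v'` iff there is an arc labelled `op`
from `v` to `v'`; `none` means no outgoing arc with that label. -/
def stepG {α : Type} [DecidableEq α] (x y : List (Option α)) : Node → GOp → Option Node
  | none, _ => some none
  | some (i, j), op =>
    if i < x.length ∧ j < y.length then
      if i < x.length - 1 ∧ j < y.length - 1 then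
        if x[i]? ≠ y[j]? then
          match op with
          | GOp.gdel => some (some (i + 1, j))
          | GOp.grep => some (some (i + 1, j + 1))
          | GOp.gins => some (some (i, j + 1))
          | GOp.gloop => some (some (i, j))
          | GOp.gstop => some none
          | GOp.gmat => none
        else
          match op with
          | GOp.gmat => some (some (i + 1, j + 1))
          | GOp.gloop => some (some (i, j))
          | _ => none
      else if i = x.length - 1 ∧ j < y.length - 1 then
        match op with
        | GOp.gins => some (some (i, j + 1))
        | GOp.gloop => some (some (i, j))
        | GOp.gdel | GOp.grep | GOp.gstop => some none
        | GOp.gmat => none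
      else if i < x.length - 1 ∧ j = y.length - 1 then
        match op with
        | GOp.gdel => some (some (i + 1, j))
        | GOp.gloop => some (some (i, j))
        | GOp.gins | GOp.grep | GOp.gstop => some none
        | GOp.gmat => none
      else
        match op with
        | GOp.gloop => some (some (i, j))
        | _ => none
    else none

/-- Follow a list of grid-walk characters through `G(x,y)` starting at node `v`;
returns `none` if at some step the required arc does not exist. -/
def walkFrom {α : Type} [DecidableEq α] (x y : List (Option α)) : Node → List GOp → Option Node
  | v, [] => some v
  | v, op :: rest =>
    match stepG x y v op with
    | none => none
    | some v' => walkFrom x y v' rest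


/-! ### Auxiliary material for `stmt0` -/

open scoped ENNReal

/-- Number of hash-inserts in a transcript. -/
def nins (l : List HashOp) : ℕ := l.countP (fun o => decide (o = HashOp.ins))

theorem transcriptAux_length_le {α : Type} (pav prv : ℝ) (f : Option α × ℕ → ℝ × ℝ) :
    ∀ (fuel : ℕ) (rest : List (Option α)) (k : ℕ),
      (transcriptAux pav prv f fuel rest k).length ≤ fuel := by
  intro fuel
  induction fuel with
  | zero => intro rest k; simp [transcriptAux]
  | succ m ih =>
    intro rest k
    cases rest with
    | nil => simp [transcriptAux]
    | cons c r =>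
      simp only [transcriptAux]
      split_ifs <;> simpa using ih _ _

theorem transcriptAux_length_le_nins_add {α : Type} (pav prv : ℝ) (f : Option α × ℕ → ℝ × ℝ) :
    ∀ (fuel : ℕ) (rest : List (Option α)) (k : ℕ),
      (transcriptAux pav prv f fuel rest k).length ≤
        nins (transcriptAux pav prv f fuel rest k) + rest.length := by
  intro fuel
  induction fuel with
  | zero => intro rest k; simp [transcriptAux]
  | succ m ih =>
    intro rest k
    cases rest with
    | nil => simp [transcriptAux]
    | cons c r =>
      simp only [transcriptAux]
      split_ifs with h1 h2
      · have := ih (c :: r) (k+1); simp [nins, List.countP_cons] at this ⊢; omega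
      · have := ih r (k+1); simp [nins, List.countP_cons] at this ⊢; omega
      · have := ih r (k+1); simp [nins, List.countP_cons] at this ⊢; omega

theorem transcriptAux_congr {α : Type} (pav prv : ℝ) (f g : Option α × ℕ → ℝ × ℝ) :
    ∀ (fuel : ℕ) (rest : List (Option α)) (k : ℕ),
      (∀ (c : Option α) (i : ℕ), k ≤ i → f (c, i) = g (c, i)) →
      transcriptAux pav prv f fuel rest k = transcriptAux pav prv g fuel rest k := by
  intro fuel
  induction fuel with
  | zero => intro rest k _; simp [transcriptAux]
  | succ m ih =>
    intro rest k hfg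
    cases rest with
    | nil => simp [transcriptAux]
    | cons c r =>
      have hk : f (c, k) = g (c, k) := hfg c k le_rfl
      have hnext : ∀ (c' : Option α) (i : ℕ), k + 1 ≤ i → f (c', i) = g (c', i) :=
        fun c' i hi => hfg c' i (by omega)
      simp only [transcriptAux, hk]
      split_ifs <;> rw [ih _ _ hnext]

instance : IsProbabilityMeasure unif01 := by
  constructor
  rw [unif01, ← Set.univ_prod_univ, Measure.prod_prod]
  simp [Real.volume_Ico]

theorem unif01_fst_le {a : ℝ} (h0 : 0 ≤ a) (h1 : a < 1) :
    unif01 {r : ℝ × ℝ | r.1 ≤ a} = ENNReal.ofReal a := by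
  have h : {r : ℝ × ℝ | r.1 ≤ a} = Set.Iic a ×ˢ Set.univ := by
    ext r; simp [Set.mem_prod]
  rw [h, unif01, Measure.prod_prod, Measure.restrict_apply measurableSet_Iic,
    Measure.restrict_apply_univ]
  have h2 : Set.Iic a ∩ Set.Ico (0:ℝ) 1 = Set.Icc 0 a := by
    ext r; simp only [Set.mem_inter_iff, Set.mem_Iic, Set.mem_Ico, Set.mem_Icc]
    constructor
    · rintro ⟨h, h', _⟩; exact ⟨h', h⟩
    · rintro ⟨h', h⟩; exact ⟨h, h', lt_of_le_of_lt h h1⟩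
  rw [h2, Real.volume_Ico, Real.volume_Icc]
  simp

theorem unif01_fst_le_compl {a : ℝ} (h0 : 0 ≤ a) (h1 : a < 1) :
    unif01 {r : ℝ × ℝ | r.1 ≤ a}ᶜ = 1 - ENNReal.ofReal a := by
  have hS : MeasurableSet {r : ℝ × ℝ | r.1 ≤ a} := measurable_fst measurableSet_Iic
  rw [measure_compl hS (measure_ne_top _ _), measure_univ, unif01_fst_le h0 h1]

theorem lintegral_ite_unif01 {a : ℝ} (h0 : 0 ≤ a) (h1 : a < 1) (u v : ℝ≥0∞) :
    (∫⁻ y : ℝ × ℝ, (if y.1 ≤ a then u else v) ∂unif01) =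
      u * ENNReal.ofReal a + v * (1 - ENNReal.ofReal a) := by
  have hS : MeasurableSet {r : ℝ × ℝ | r.1 ≤ a} := measurable_fst measurableSet_Iic
  have h : (fun y : ℝ × ℝ => if y.1 ≤ a then u else v) =
      fun y => {r : ℝ × ℝ | r.1 ≤ a}.indicator (fun _ => u) y +
        ({r : ℝ × ℝ | r.1 ≤ a}ᶜ).indicator (fun _ => v) y := by
    ext y
    by_cases h : y.1 ≤ a <;> simp [h, Set.indicator]
  rw [h, lintegral_add_left (measurable_const.indicator hS),
    lintegral_indicator_const hS, lintegral_indicator_const hS.compl,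
    unif01_fst_le h0 h1, unif01_fst_le_compl h0 h1]

/-- The exponential weight `4^{#inserts}` of the transcript. -/
noncomputable def W {α : Type} (p : ℝ) (d n : ℕ) (fuel : ℕ) (rest : List (Option α)) (k : ℕ) :
    Ufun α p d n → ℝ≥0∞ :=
  fun ρ => (4 : ℝ≥0∞) ^ nins (transcriptAux (pa p) (prr p) (ext p d n ρ) fuel rest k)

theorem W_succ {α : Type} (p : ℝ) (d n : ℕ) (fuel : ℕ) (c : Option α)
    (rest : List (Option α)) (k : ℕ) :
    W p d n (fuel+1) (c :: rest) k = fun ρ : Ufun α p d n =>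
      if (ext p d n ρ (c, k)).1 ≤ pa p then 4 * W p d n fuel (c :: rest) (k+1) ρ
      else W p d n fuel rest (k+1) ρ := by
  funext ρ
  simp only [W, transcriptAux]
  split_ifs with h1 h2 <;>
    simp [nins, List.countP_cons, pow_succ, mul_comm]

theorem measurableSet_extCond {α : Type} [Fintype α] (p : ℝ) (d n : ℕ) (c : Option α)
    (k : ℕ) (t : ℝ) :
    MeasurableSet {ρ : Ufun α p d n | (ext p d n ρ (c, k)).1 ≤ t} := by
  by_cases h : k < LN p d n
  · have he : {ρ : Ufun α p d n | (ext p d n ρ (c, k)).1 ≤ t} =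
        {ρ : Ufun α p d n | (ρ (c, ⟨k, h⟩)).1 ≤ t} := by
      ext ρ; simp [ext, h]
    rw [he]
    have hm : Measurable (fun ρ : Ufun α p d n => (ρ (c, ⟨k, h⟩)).1) :=
      (measurable_pi_apply _).fst
    exact hm measurableSet_Iic
  · have he : {ρ : Ufun α p d n | (ext p d n ρ (c, k)).1 ≤ t} =
        {ρ : Ufun α p d n | (1:ℝ) ≤ t} := by
      ext ρ; simp [ext, h]
    rw [he]
    exact MeasurableSet.const _

theorem W_measurable {α : Type} [Fintype α] (p : ℝ) (d n : ℕ) :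
    ∀ (fuel : ℕ) (rest : List (Option α)) (k : ℕ), Measurable (W p d n fuel rest k) := by
  intro fuel
  induction fuel with
  | zero =>
    intro rest k
    have h : W (α := α) p d n 0 rest k = fun _ => 1 := by
      funext ρ; simp [W, transcriptAux, nins]
    rw [h]; exact measurable_const
  | succ m ih =>
    intro rest k
    cases rest with
    | nil =>
      have h : W (α := α) p d n (m+1) [] k = fun _ => 1 := by
        funext ρ; simp [W, transcriptAux, nins]
      rw [h]; exact measurable_const
    | cons c r =>
      rw [W_succ]
      exact Measurable.ite (measurableSet_extCond p d n c k (pa p))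
        ((ih (c :: r) (k+1)).const_mul 4) (ih r (k+1))

theorem W_update {α : Type} [Fintype α] [DecidableEq α] (p : ℝ) (d n : ℕ)
    (fuel : ℕ) (rest : List (Option α)) (k : ℕ) (c₀ : Option α) (i₀ : Fin (LN p d n))
    (hi : i₀.1 < k) (ρ : Ufun α p d n) (y : ℝ × ℝ) :
    W p d n fuel rest k (Function.update ρ (c₀, i₀) y) = W p d n fuel rest k ρ := by
  unfold W
  congr 1
  unfold nins
  congr 1
  apply transcriptAux_congr
  intro c i hki
  simp only [ext]
  split
  · next h =>
    congr 1
    apply Function.update_of_ne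
    intro he
    have h2 : (⟨i, h⟩ : Fin (LN p d n)) = i₀ := (Prod.mk.injEq _ _ _ _ ▸ he).2
    have h3 : i = (i₀ : ℕ) := by simpa using congrArg Fin.val h2
    omega
  · rfl

theorem key_bound {α : Type} [Fintype α] [DecidableEq α] (p : ℝ)
    (hpa0 : 0 ≤ pa p) (hpa : pa p ≤ 1/2) (d n : ℕ) :
    ∀ (fuel : ℕ) (rest : List (Option α)) (k : ℕ), k + fuel ≤ LN p d n →
      ∀ T : Finset (Option α × Fin (LN p d n)),
        (∀ (c : Option α) (i : Fin (LN p d n)), k ≤ i.1 → (c, i) ∈ T) →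
        ∀ x₀ : Ufun α p d n,
          (∫⋯∫⁻_T, W p d n fuel rest k ∂(fun _ => unif01)) x₀ ≤ (5/2 : ℝ≥0∞) ^ fuel := by
  have hone : ∀ (fuel : ℕ) (rest : List (Option α)) (k : ℕ)
      (T : Finset (Option α × Fin (LN p d n))) (x₀ : Ufun α p d n),
      W (α := α) p d n fuel rest k = (fun _ => 1) →
      (∫⋯∫⁻_T, W p d n fuel rest k ∂(fun _ => unif01)) x₀ ≤ 1 := by
    intro fuel rest k T x₀ hW
    rw [hW]
    simp only [lmarginal, lintegral_const, measure_univ, mul_one, le_refl]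
  intro fuel
  induction fuel with
  | zero =>
    intro rest k _ T _ x₀
    simpa using hone 0 rest k T x₀ (by funext ρ; simp [W, transcriptAux, nins])
  | succ m ih =>
    intro rest k hk T hT x₀
    cases rest with
    | nil =>
      refine le_trans (hone (m+1) [] k T x₀ (by funext ρ; simp [W, transcriptAux, nins])) ?_
      refine one_le_pow_of_one_le' ?_ _
      rw [ENNReal.le_div_iff_mul_le (Or.inl (by norm_num)) (Or.inl (by norm_num))]
      norm_num
    | cons c r =>
      have hkL : k < LN p d n := by omega
      set j : Option α × Fin (LN p d n) := (c, ⟨k, hkL⟩) with hj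
      have hjT : j ∈ T := hT c ⟨k, hkL⟩ le_rfl
      have hmeas := W_measurable p d n (m+1) (c :: r) k
      rw [← Finset.insert_erase hjT,
        lmarginal_insert _ hmeas (Finset.notMem_erase _ _)]
      have hTsub : ∀ (c' : Option α) (i' : Fin (LN p d n)), k + 1 ≤ i'.1 →
          (c', i') ∈ T.erase j := by
        intro c' i' hi'
        refine Finset.mem_erase.mpr ⟨?_, hT c' i' (by omega)⟩
        intro he
        have h2 : i' = (⟨k, hkL⟩ : Fin (LN p d n)) := (Prod.mk.injEq _ _ _ _ ▸ he).2
        have h3 : (i' : ℕ) = k := by simpa using congrArg Fin.val h2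
        omega
      have inner : ∀ y : ℝ × ℝ,
          (∫⋯∫⁻_(T.erase j), W p d n (m+1) (c :: r) k ∂(fun _ => unif01))
            (Function.update x₀ j y) ≤
          if y.1 ≤ pa p then 4 * (5/2 : ℝ≥0∞) ^ m else (5/2 : ℝ≥0∞) ^ m := by
        intro y
        rw [lmarginal_update_of_notMem hmeas (Finset.notMem_erase _ _)]
        have hcomp : (W p d n (m+1) (c :: r) k ∘ (Function.update · j y)) =
            fun ρ : Ufun α p d n => if y.1 ≤ pa p
              then 4 * W p d n m (c :: r) (k+1) ρ else W p d n m r (k+1) ρ := by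
          funext ρ
          simp only [Function.comp, W_succ]
          have hext : ext p d n (Function.update ρ j y) (c, k) = y := by
            simp only [ext, hkL, dif_pos]
            exact Function.update_self _ _ _
          rw [hext, W_update p d n m (c :: r) (k+1) c ⟨k, hkL⟩ (Nat.lt_succ_self k) ρ y,
            W_update p d n m r (k+1) c ⟨k, hkL⟩ (Nat.lt_succ_self k) ρ y]
        rw [hcomp]
        by_cases hy : y.1 ≤ pa p
        · simp only [hy, if_true]
          have hpull : (∫⋯∫⁻_(T.erase j),
              (fun ρ : Ufun α p d n => 4 * W p d n m (c :: r) (k+1) ρ) ∂(fun _ => unif01)) x₀ =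
              4 * (∫⋯∫⁻_(T.erase j), W p d n m (c :: r) (k+1) ∂(fun _ => unif01)) x₀ := by
            simp only [lmarginal]
            exact lintegral_const_mul' _ _ (by norm_num)
          rw [hpull]
          gcongr
          exact ih (c :: r) (k+1) (by omega) _ hTsub x₀
        · simp only [hy, if_false]
          exact ih r (k+1) (by omega) _ hTsub x₀
      refine le_trans (lintegral_mono inner) ?_
      rw [lintegral_ite_unif01 hpa0 (lt_of_le_of_lt hpa (by norm_num)) _ _]
      set q : ℝ≥0∞ := ENNReal.ofReal (pa p) with hqdef
      set cc : ℝ≥0∞ := (5/2 : ℝ≥0∞) ^ m with hcc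
      have hq : q ≤ 1/2 := by
        refine le_trans (ENNReal.ofReal_le_ofReal hpa) ?_
        rw [ENNReal.ofReal_div_of_pos (by norm_num)]
        simp
      have hq1 : q + (1 - q) = 1 := add_tsub_cancel_of_le (le_trans hq (by norm_num))
      have harith : 4 * cc * q + cc * (1 - q) = 3 * (cc * q) + cc := by
        have : 4 * cc * q + cc * (1 - q) = 3 * (cc * q) + cc * (q + (1 - q)) := by ring
        rw [this, hq1, mul_one]
      rw [harith]
      have h3 : 3 * (cc * q) ≤ 3 * (cc * (1/2)) := by gcongr
      refine le_trans (add_le_add_left h3 cc) ?_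
      have hhalf : (3 : ℝ≥0∞) * (cc * (1/2)) = cc * (3/2) := by
        rw [show (3:ℝ≥0∞) * (cc * (1/2)) = cc * (3 * (1/2)) by ring, mul_one_div]
      have hfrac : (3:ℝ≥0∞)/2 + 1 = 5/2 := by
        rw [show (1:ℝ≥0∞) = 2/2 by rw [ENNReal.div_self (by norm_num) (by norm_num)],
          ENNReal.div_add_div_same]
        norm_num
      rw [hhalf, show cc * (3/2) + cc = cc * (3/2 + 1) by rw [mul_add, mul_one], hfrac,
        pow_succ]

/-- For any string `x` over `Σ` of length at most `d` (with `$` appended),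
the probability over a random underlying function `ρ` that the transcript `τ(x,ρ)` is
complete is at least `1 − 1/n²`. -/
theorem stmt0 {α : Type} [Fintype α] [DecidableEq α]
    (p : ℝ) (hp0 : 0 < p) (hp : p ≤ 1 / 3) (n d : ℕ) (hn : 2 ≤ n) (hd : 1 ≤ d)
    (x : List α) (hx : x.length ≤ d) :
    1 - 1 / (n : ENNReal) ^ 2 ≤
      μU α p d n {ρ | CompleteT p d n (transcript p d n ρ (x.map some ++ [none]))} := by
  classical
  have h1p : (0:ℝ) < 1 + p := by linarith
  have hpa0 : 0 ≤ pa p := Real.sqrt_nonneg _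
  have hfrac : p / (1+p) ≤ 1/4 := by rw [div_le_iff₀ h1p]; linarith
  have hpa : pa p ≤ 1/2 := by
    have h2 : pa p ≤ Real.sqrt (1/4) := Real.sqrt_le_sqrt hfrac
    have h3 : Real.sqrt (1/4 : ℝ) = 1/2 := by
      rw [show (1/4:ℝ) = (1/2)^2 by norm_num, Real.sqrt_sq (by norm_num : (0:ℝ) ≤ 1/2)]
    linarith
  have hn1 : 1 < n := lt_of_lt_of_le one_lt_two hn
  have hn1R : (1:ℝ) < (n:ℝ) := by exact_mod_cast hn1
  have hlogn : 0 < Real.log n := Real.log_pos hn1R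
  have h1pa : 0 < 1 - pa p := by linarith
  have h8d : (8*(d:ℝ)) ≤ 8*d/(1 - pa p) := by
    rw [le_div_iff₀ h1pa]
    have hd0 : (0:ℝ) ≤ (d:ℝ) := Nat.cast_nonneg d
    nlinarith
  have hLreal8d : (8*(d:ℝ)) < Lreal p d n := by
    have : Lreal p d n = 8*d/(1 - pa p) + 6 * Real.log n := rfl
    rw [this]; linarith
  set N := LN p d n with hNdef
  have hLN : Lreal p d n ≤ (N:ℝ) := Nat.le_ceil _
  have h8dN : 8*d < N := by
    have h : (8*(d:ℝ)) < (N:ℝ) := lt_of_lt_of_le hLreal8d hLN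
    exact_mod_cast h
  have hdN : d + 1 < N := by omega
  set m := N - (d+1) with hmdef
  have hmN : m + (d+1) = N := by omega
  set x' : List (Option α) := x.map some ++ [none] with hx'
  have hx'len : x'.length = x.length + 1 := by simp [hx']
  haveI : IsProbabilityMeasure (μU α p d n) := by
    unfold μU; infer_instance
  -- expectation bound
  have hW : (∫⁻ ρ, W p d n N x' 0 ρ ∂(μU α p d n)) ≤ (5/2 : ℝ≥0∞)^N := by
    have hpi : μU α p d n = Measure.pi (fun _ : Option α × Fin (LN p d n) => unif01) := rfl
    rw [hpi, lintegral_eq_lmarginal_univ (fun _ => ((0:ℝ),(0:ℝ)))]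
    exact key_bound p hpa0 hpa d n N x' 0 (by omega) Finset.univ
      (fun _ _ _ => Finset.mem_univ _) _
  have hmeasW := W_measurable (α := α) p d n N x' 0
  -- event inclusion
  have hincl : {ρ : Ufun α p d n | ¬ CompleteT p d n (transcript p d n ρ x')} ⊆
      {ρ : Ufun α p d n | (4:ℝ≥0∞)^m ≤ W p d n N x' 0 ρ} := by
    intro ρ hρ
    simp only [Set.mem_setOf_eq, CompleteT, not_lt] at hρ
    have htr : transcript p d n ρ x' =
        transcriptAux (pa p) (prr p) (ext p d n ρ) N x' 0 := by rw [hNdef]; rfl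
    have hlen1 : (transcript p d n ρ x').length ≤ N := by
      rw [htr]; exact transcriptAux_length_le _ _ _ _ _ _
    have hlen2 : N ≤ (transcript p d n ρ x').length := by
      by_contra hcon
      push_neg at hcon
      rw [hNdef] at hcon
      have hlt : ((transcript p d n ρ x').length : ℝ) < Lreal p d n := Nat.lt_ceil.mp hcon
      linarith
    have hnins : (transcript p d n ρ x').length ≤
        nins (transcript p d n ρ x') + x'.length := by
      rw [htr]; exact transcriptAux_length_le_nins_add _ _ _ _ _ _
    have hmle : m ≤ nins (transcript p d n ρ x') := by omega
    simp only [Set.mem_setOf_eq]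
    calc (4:ℝ≥0∞)^m ≤ (4:ℝ≥0∞)^(nins (transcript p d n ρ x')) :=
          pow_le_pow_right₀ (by norm_num) hmle
      _ = W p d n N x' 0 ρ := by rw [W, htr]
  -- Markov
  have h40 : ((4:ℝ≥0∞)^m) ≠ 0 := pow_ne_zero m (by norm_num)
  have h4t : ((4:ℝ≥0∞)^m) ≠ ⊤ := ENNReal.pow_ne_top (by norm_num)
  have hmarkov : μU α p d n {ρ | ¬ CompleteT p d n (transcript p d n ρ x')} ≤
      (5/2:ℝ≥0∞)^N / 4^m := by
    refine le_trans (measure_mono hincl) ?_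
    rw [ENNReal.le_div_iff_mul_le (Or.inl h40) (Or.inl h4t)]
    calc μU α p d n {ρ : Ufun α p d n | (4:ℝ≥0∞)^m ≤ W p d n N x' 0 ρ} * 4^m
        = 4^m * μU α p d n {ρ : Ufun α p d n | (4:ℝ≥0∞)^m ≤ W p d n N x' 0 ρ} := mul_comm _ _
      _ ≤ ∫⁻ ρ, W p d n N x' 0 ρ ∂(μU α p d n) :=
          mul_meas_ge_le_lintegral₀ hmeasW.aemeasurable _
      _ ≤ (5/2:ℝ≥0∞)^N := hW
  -- numeric bound (real part)
  have hlog85 : (1/3:ℝ) ≤ Real.log (8/5) := by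
    rw [Real.le_log_iff_exp_le (by norm_num : (0:ℝ) < 8/5)]
    have h3 : Real.exp (1/3) ^ (3:ℕ) = Real.exp 1 := by
      rw [← Real.exp_nat_mul]; norm_num
    refine le_of_pow_le_pow_left₀ (n := 3) (by norm_num) (by norm_num) ?_
    rw [h3]
    nlinarith [Real.exp_one_lt_d9]
  have hA1 : (n:ℝ)^2 ≤ (8/5:ℝ) ^ (6 * Real.log n) := by
    have hn0 : (0:ℝ) < (n:ℝ) := lt_trans zero_lt_one hn1R
    have e1 : ((n:ℝ))^2 = Real.exp (Real.log ((n:ℝ)^2)) := (Real.exp_log (by positivity)).symm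
    rw [e1, Real.log_pow, Real.rpow_def_of_pos (by norm_num : (0:ℝ) < 8/5)]
    apply Real.exp_le_exp.mpr
    push_cast
    nlinarith [hlog85, hlogn]
  have hA2 : (4:ℝ)^(d+1) ≤ (8/5:ℝ) ^ ((8*(d:ℝ))/(1 - pa p)) := by
    have step1 : (4:ℝ)^(d+1) ≤ (8/5:ℝ)^(8*d : ℕ) := by
      have h16 : (4:ℝ)^(d+1) ≤ (16:ℝ)^d := by
        have h162 : (16:ℝ)^d = 4^(2*d) := by
          rw [show (16:ℝ) = 4^2 by norm_num, ← pow_mul]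
        rw [h162]
        exact pow_le_pow_right₀ (by norm_num) (by omega)
      have h2 : (16:ℝ)^d ≤ ((8/5:ℝ)^8)^d := pow_le_pow_left₀ (by norm_num) (by norm_num) d
      rw [show 8*d = d*8 by ring, pow_mul']
      linarith
    have step2 : ((8/5:ℝ)^(8*d:ℕ)) = (8/5:ℝ) ^ ((8*(d:ℝ)):ℝ) := by
      rw [← Real.rpow_natCast (8/5:ℝ) (8*d)]
      push_cast
      ring_nf
    have step3 : (8/5:ℝ) ^ ((8*(d:ℝ)):ℝ) ≤ (8/5:ℝ) ^ ((8*(d:ℝ))/(1-pa p)) :=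
      (Real.rpow_le_rpow_left_iff (by norm_num)).mpr h8d
    calc (4:ℝ)^(d+1) ≤ (8/5:ℝ)^(8*d:ℕ) := step1
      _ = (8/5:ℝ) ^ ((8*(d:ℝ)):ℝ) := step2
      _ ≤ _ := step3
  have hAcomb : (n:ℝ)^2 * 4^(d+1) ≤ (8/5:ℝ) ^ (Lreal p d n) := by
    have hsplit : (8/5:ℝ) ^ (Lreal p d n) =
        (8/5:ℝ)^((8*(d:ℝ))/(1-pa p)) * (8/5:ℝ)^(6*Real.log n) := by
      rw [← Real.rpow_add (by norm_num : (0:ℝ) < 8/5)]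
      rfl
    rw [hsplit]
    calc (n:ℝ)^2 * 4^(d+1)
        ≤ ((8/5:ℝ)^(6*Real.log n)) * ((8/5:ℝ)^((8*(d:ℝ))/(1-pa p))) :=
          mul_le_mul hA1 hA2 (by positivity) (Real.rpow_nonneg (by norm_num) _)
      _ = _ := mul_comm _ _
  have hBN : (8/5:ℝ) ^ (Lreal p d n) ≤ (8/5:ℝ)^(N:ℕ) := by
    rw [← Real.rpow_natCast (8/5:ℝ) N]
    exact (Real.rpow_le_rpow_left_iff (by norm_num)).mpr hLN
  have hreal : (n:ℝ)^2 * (5/2)^N ≤ 4^m := by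
    have h4m : (4:ℝ)^N = (4:ℝ)^m * 4^(d+1) := by rw [← pow_add, hmN]
    have hchain : (n:ℝ)^2 * (5/2)^N * 4^(d+1) ≤ 4^m * 4^(d+1) := by
      calc (n:ℝ)^2 * (5/2)^N * 4^(d+1) = (n:ℝ)^2 * 4^(d+1) * (5/2)^N := by ring
        _ ≤ (8/5:ℝ)^N * (5/2)^N := by
            exact mul_le_mul_of_nonneg_right (le_trans hAcomb hBN) (by positivity)
        _ = 4^N := by rw [← mul_pow]; norm_num
        _ = 4^m * 4^(d+1) := h4m
    exact le_of_mul_le_mul_right hchain (by positivity)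
  -- numeric bound (transfer to ℝ≥0∞)
  have hENN : ((n:ℝ≥0∞))^2 * (5/2)^N ≤ (4:ℝ≥0∞)^m := by
    have h := ENNReal.ofReal_le_ofReal hreal
    rw [ENNReal.ofReal_mul (by positivity), ENNReal.ofReal_pow (by positivity : (0:ℝ) ≤ (n:ℝ)),
      ENNReal.ofReal_pow (by norm_num : (0:ℝ) ≤ (5/2:ℝ)),
      ENNReal.ofReal_pow (by norm_num : (0:ℝ) ≤ (4:ℝ)),
      ENNReal.ofReal_natCast,
      show ENNReal.ofReal (5/2:ℝ) = 5/2 by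
        rw [ENNReal.ofReal_div_of_pos (by norm_num)]; norm_num,
      show ENNReal.ofReal (4:ℝ) = 4 by rw [ENNReal.ofReal_ofNat]] at h
    exact h
  have hn2ne0 : ((n:ℝ≥0∞))^2 ≠ 0 := by
    exact pow_ne_zero 2 (Nat.cast_ne_zero.mpr (by omega))
  have hn2net : ((n:ℝ≥0∞))^2 ≠ ⊤ := ENNReal.pow_ne_top (ENNReal.natCast_ne_top n)
  have hnum : (5/2:ℝ≥0∞)^N / 4^m ≤ 1/(n:ℝ≥0∞)^2 := by
    rw [ENNReal.div_le_iff h40 h4t, one_div]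
    calc (5/2:ℝ≥0∞)^N = ((n:ℝ≥0∞)^2)⁻¹ * ((n:ℝ≥0∞)^2 * (5/2)^N) := by
          rw [← mul_assoc, ENNReal.inv_mul_cancel hn2ne0 hn2net, one_mul]
      _ ≤ ((n:ℝ≥0∞)^2)⁻¹ * 4^m := by gcongr
  -- finish
  have hbad : μU α p d n {ρ | ¬ CompleteT p d n (transcript p d n ρ x')} ≤ 1/(n:ℝ≥0∞)^2 :=
    le_trans hmarkov hnum
  have hunion := measure_union_le (μ := μU α p d n)
      {ρ : Ufun α p d n | CompleteT p d n (transcript p d n ρ x')}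
      {ρ : Ufun α p d n | CompleteT p d n (transcript p d n ρ x')}ᶜ
  rw [Set.union_compl_self, measure_univ] at hunion
  have hcompl : {ρ : Ufun α p d n | CompleteT p d n (transcript p d n ρ x')}ᶜ =
      {ρ : Ufun α p d n | ¬ CompleteT p d n (transcript p d n ρ x')} := by
    ext ρ; simp
  rw [hcompl] at hunion
  rw [tsub_le_iff_right]
  calc (1:ℝ≥0∞) ≤ μU α p d n {ρ : Ufun α p d n | CompleteT p d n (transcript p d n ρ x')} +
        μU α p d n {ρ : Ufun α p d n | ¬ CompleteT p d n (transcript p d n ρ x')} := hunion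
    _ ≤ μU α p d n {ρ : Ufun α p d n | CompleteT p d n (transcript p d n ρ x')} +
        1/(n:ℝ≥0∞)^2 := add_le_add_right hbad _


end EditLSH
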